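/- A CI-net N is satisfiable if and only if there is no nonempty cycle of worsening flips with respect to N, i.e., no set S ⊆ O with a sequence of at least one worsening flip leading from S back to S. -/
import Mathlib


variable {O : Type*} [Fintype O] [DecidableEq O]

/-- A strict partial order: irreflexive, asymmetric, transitive. -/
def IsPrefRel {α : Type*} (r : α → α → Prop) : Prop :=
  (∀ a, ¬ r a a) ∧ (∀ a b, r a b → ¬ r b a) ∧ (∀ a b c, r a b → r b c → r a c)

/-- Monotonicity on subsets of `O`: a strict superset is strictly preferred. -/
def Monotonic (r : Finset O → Finset O → Prop) : Prop :=
  ∀ a b : Finset O, b ⊂ a → r a b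

/-- A CI-statement `S⁺, S⁻ : S₁ ▷ S₂` on `O`. -/
structure CIStmt (O : Type*) [DecidableEq O] where
  sp : Finset O
  sm : Finset O
  s1 : Finset O
  s2 : Finset O
  h1 : s1.Nonempty
  h2 : s2.Nonempty
  dpm : Disjoint sp sm
  dp1 : Disjoint sp s1
  dp2 : Disjoint sp s2
  dm1 : Disjoint sm s1
  dm2 : Disjoint sm s2
  d12 : Disjoint s1 s2

/-- `r` satisfies a CI-statement. -/
def SatStmt (r : Finset O → Finset O → Prop) (c : CIStmt O) : Prop :=
  ∀ S' : Finset O, S' ⊆ Finset.univ \ (c.sp ∪ c.sm ∪ c.s1 ∪ c.s2) →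
    r (S' ∪ c.sp ∪ c.s1) (S' ∪ c.sp ∪ c.s2)

/-- `r` satisfies a CI-net: monotone and satisfies each statement. -/
def SatNet (r : Finset O → Finset O → Prop) (N : Set (CIStmt O)) : Prop :=
  Monotonic r ∧ ∀ c ∈ N, SatStmt r c

/-- A CI-net is satisfiable. -/
def CISatisfiable (N : Set (CIStmt O)) : Prop :=
  ∃ r : Finset O → Finset O → Prop, IsPrefRel r ∧ SatNet r N

/-- CI-flip with respect to `N`. -/
def CIFlip (N : Set (CIStmt O)) (a b : Finset O) : Prop :=
  ∃ c ∈ N, ∃ S' ⊆ Finset.univ \ (c.sp ∪ c.sm ∪ c.s1 ∪ c.s2),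
    a = S' ∪ c.sp ∪ c.s1 ∧ b = S' ∪ c.sp ∪ c.s2

/-- Worsening flip: a `⊃`-flip or a CI-flip. -/
def WFlip (N : Set (CIStmt O)) (a b : Finset O) : Prop :=
  b ⊂ a ∨ CIFlip N a b

/-- The intersection of all preference relations satisfying `N`. -/
def Induced (N : Set (CIStmt O)) (a b : Finset O) : Prop :=
  ∀ r : Finset O → Finset O → Prop, IsPrefRel r ∧ SatNet r N → r a b

/-- a CI-net is satisfiable iff there is no nonempty cycle of
worsening flips. -/
theorem stmt_2 (N : Set (CIStmt O)) :
    CISatisfiable N ↔ ¬ ∃ S : Finset O, Relation.TransGen (WFlip N) S S := by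
  constructor
  · rintro ⟨r, ⟨hirr, _hasym, htrans⟩, hmono, hsat⟩ ⟨S, hS⟩
    have key : ∀ a b, Relation.TransGen (WFlip N) a b → r a b := by
      intro a b h
      induction h with
      | single h =>
        rcases h with h | ⟨c, hc, S', hS', rfl, rfl⟩
        · exact hmono _ _ h
        · exact hsat c hc S' hS'
      | tail _ h2 ih =>
        rcases h2 with h | ⟨c, hc, S', hS', rfl, rfl⟩
        · exact htrans _ _ _ ih (hmono _ _ h)
        · exact htrans _ _ _ ih (hsat c hc S' hS')
    exact hirr S (key S S hS)
  · intro hnc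
    refine ⟨Relation.TransGen (WFlip N), ⟨?_, ?_, ?_⟩, ?_, ?_⟩
    · intro a ha; exact hnc ⟨a, ha⟩
    · intro a b hab hba; exact hnc ⟨a, hab.trans hba⟩
    · intro a b c hab hbc; exact hab.trans hbc
    · intro a b h; exact Relation.TransGen.single (Or.inl h)
    · intro c hc S' hS'
      exact Relation.TransGen.single (Or.inr ⟨c, hc, S', hS', rfl, rfl⟩)
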